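/- Let H_1, …, H_L be self-adjoint bounded operators on a finite-dimensional complex Hilbert space, let H = Σ_{ℓ=1}^{L} H_ℓ, let t be a real number, and let n ≥ 1. Then each operator exp(2πi (t/n) H_ℓ) is unitary, exp(2πi t H) is unitary, and ‖exp(2πi t H) − (exp(2πi (t/n) H_1) ⋯ exp(2πi (t/n) H_L))^n‖ ≤ (2π|t| Σ_ℓ ‖H_ℓ‖)² · exp(4π|t| Σ_ℓ ‖H_ℓ‖) / n, where ‖·‖ is the operator norm. Thus the Schrödinger evolution U_t = exp(2πi t H) of a poly-local Hamiltonian is approximated in operator norm, with error L²·O(1/n), by an n-fold repetition of the product of the individual local evolutions. -/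

import Mathlib

open NormedSpace Complex

lemma trotter_real_exp_tail (s : ℝ) :
    Real.exp s = 1 + s + ∑' n : ℕ, s ^ (n + 2) / (n + 2).factorial := by
  have hsum : Summable fun n : ℕ => s ^ n / n.factorial := Real.summable_pow_div_factorial s
  have h1 : Summable fun n : ℕ => s ^ (n + 1) / (n + 1).factorial :=
    hsum.comp_injective (add_left_injective 1)
  rw [Real.exp_eq_exp_ℝ, exp_eq_tsum_div]
  simp only []
  rw [hsum.tsum_eq_zero_add, h1.tsum_eq_zero_add]
  simp
  ring

lemma trotter_real_aux {s : ℝ} (hs : 0 ≤ s) :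
    Real.exp s - 1 - s ≤ s ^ 2 / 2 * Real.exp s := by
  have hsum : Summable fun n : ℕ => s ^ n / n.factorial := Real.summable_pow_div_factorial s
  have h2 : Summable fun n : ℕ => s ^ (n + 2) / (n + 2).factorial :=
    hsum.comp_injective (add_left_injective 2)
  have htail : Real.exp s - 1 - s = ∑' n : ℕ, s ^ (n + 2) / (n + 2).factorial := by
    rw [trotter_real_exp_tail s]; ring
  have hrhs : s ^ 2 / 2 * Real.exp s = ∑' n : ℕ, s ^ 2 / 2 * (s ^ n / n.factorial) := by
    rw [Real.exp_eq_exp_ℝ, exp_eq_tsum_div, tsum_mul_left]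
  rw [htail, hrhs]
  refine Summable.tsum_le_tsum (fun n => ?_) h2 (hsum.mul_left _)
  have hf1 : (1 : ℝ) ≤ n.factorial := by exact_mod_cast Nat.one_le_iff_ne_zero.mpr (Nat.factorial_ne_zero n)
  have hn0 : (0 : ℝ) ≤ (n : ℝ) := Nat.cast_nonneg n
  have hfac : (2 : ℝ) * n.factorial ≤ ((n + 2).factorial : ℝ) := by
    rw [Nat.factorial_succ, Nat.factorial_succ]
    push_cast
    nlinarith [mul_nonneg hn0 (le_trans zero_le_one hf1), mul_nonneg (mul_nonneg hn0 hn0) (le_trans zero_le_one hf1)]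
  have hpow : (0 : ℝ) ≤ s ^ n := pow_nonneg hs n
  have h2n : (0 : ℝ) < 2 * n.factorial := by positivity
  rw [pow_add]
  rw [div_le_iff₀ (lt_of_lt_of_le h2n hfac)]
  calc s ^ n * s ^ 2 = s ^ 2 / 2 * (s ^ n / n.factorial) * (2 * n.factorial) := by
        field_simp
    _ ≤ s ^ 2 / 2 * (s ^ n / n.factorial) * (n + 2).factorial := by
        have hnn : 0 ≤ s ^ 2 / 2 * (s ^ n / n.factorial) := by positivity
        exact mul_le_mul_of_nonneg_left hfac hnn

lemma trotter_mono {a b : ℝ} (ha : 0 ≤ a) (hab : a ≤ b) :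
    Real.exp a - 1 - a ≤ Real.exp b - 1 - b := by
  have h1 : Real.exp a * Real.exp (b - a) = Real.exp b := by
    rw [← Real.exp_add]; ring_nf
  have h2 : 1 + (b - a) ≤ Real.exp (b - a) := by linarith [Real.add_one_le_exp (b - a)]
  have h3 : 1 ≤ Real.exp a := Real.one_le_exp ha
  nlinarith

section Op

variable {A : Type*} [NormedRing A] [NormedAlgebra ℂ A] [CompleteSpace A]

lemma trotter_exp_tail (x : A) :
    NormedSpace.exp x = 1 + x + ∑' n : ℕ, ((n + 2).factorial⁻¹ : ℂ) • x ^ (n + 2) := by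
  have hsum : Summable fun n : ℕ => (n.factorial⁻¹ : ℂ) • x ^ n := expSeries_summable' x
  have h1 : Summable fun n : ℕ => ((n + 1).factorial⁻¹ : ℂ) • x ^ (n + 1) :=
    hsum.comp_injective (add_left_injective 1)
  rw [exp_eq_tsum ℂ]
  simp only []
  rw [hsum.tsum_eq_zero_add, h1.tsum_eq_zero_add]
  simp [add_assoc]

lemma trotter_term_norm (x : A) (n : ℕ) :
    ‖((n + 2).factorial⁻¹ : ℂ) • x ^ (n + 2)‖ ≤ ‖x‖ ^ (n + 2) / (n + 2).factorial := by
  rw [norm_smul]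
  have h1 : ‖((n + 2).factorial⁻¹ : ℂ)‖ = ((n + 2).factorial : ℝ)⁻¹ := by
    rw [norm_inv]
    norm_cast
  rw [h1]
  have h2 : ‖x ^ (n + 2)‖ ≤ ‖x‖ ^ (n + 2) := norm_pow_le' x (by omega)
  rw [div_eq_inv_mul]
  exact mul_le_mul_of_nonneg_left h2 (by positivity)

lemma trotter_exp_remainder (x : A) :
    ‖NormedSpace.exp x - 1 - x‖ ≤ Real.exp ‖x‖ - 1 - ‖x‖ := by
  have hsum : Summable fun n : ℕ => (n.factorial⁻¹ : ℂ) • x ^ n := expSeries_summable' x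
  have h2 : Summable fun n : ℕ => ((n + 2).factorial⁻¹ : ℂ) • x ^ (n + 2) :=
    hsum.comp_injective (add_left_injective 2)
  have hr : Summable fun n : ℕ => ‖x‖ ^ (n + 2) / ((n + 2).factorial : ℝ) :=
    (Real.summable_pow_div_factorial ‖x‖).comp_injective (add_left_injective 2)
  have heq : NormedSpace.exp x - 1 - x = ∑' n : ℕ, ((n + 2).factorial⁻¹ : ℂ) • x ^ (n + 2) := by
    rw [trotter_exp_tail x]; abel
  rw [heq]
  have hnorm : Summable fun n : ℕ => ‖((n + 2).factorial⁻¹ : ℂ) • x ^ (n + 2)‖ :=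
    (norm_expSeries_summable' x).comp_injective (add_left_injective 2)
  calc ‖∑' n : ℕ, ((n + 2).factorial⁻¹ : ℂ) • x ^ (n + 2)‖
      ≤ ∑' n : ℕ, ‖((n + 2).factorial⁻¹ : ℂ) • x ^ (n + 2)‖ := norm_tsum_le_tsum_norm hnorm
    _ ≤ ∑' n : ℕ, ‖x‖ ^ (n + 2) / ((n + 2).factorial : ℝ) := by
        exact Summable.tsum_le_tsum (fun n => trotter_term_norm x n) hnorm hr
    _ = Real.exp ‖x‖ - 1 - ‖x‖ := by rw [trotter_real_exp_tail ‖x‖]; ring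

lemma trotter_list_sum_norm (l : List A) : ‖l.sum‖ ≤ (l.map norm).sum := by
  induction l with
  | nil => simp
  | cons B l ih =>
    simp only [List.sum_cons, List.map_cons]
    calc ‖B + l.sum‖ ≤ ‖B‖ + ‖l.sum‖ := norm_add_le _ _
      _ ≤ ‖B‖ + (l.map norm).sum := by linarith

lemma trotter_exp_sub_one (x : A) : ‖NormedSpace.exp x - 1‖ ≤ Real.exp ‖x‖ - 1 := by
  have h1 := trotter_exp_remainder x
  calc ‖NormedSpace.exp x - 1‖ = ‖(NormedSpace.exp x - 1 - x) + x‖ := by abel_nf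
    _ ≤ ‖NormedSpace.exp x - 1 - x‖ + ‖x‖ := norm_add_le _ _
    _ ≤ Real.exp ‖x‖ - 1 := by linarith

lemma trotter_exp_mul (x : A) (z : A) : ‖NormedSpace.exp x * z‖ ≤ Real.exp ‖x‖ * ‖z‖ := by
  have h1 := trotter_exp_sub_one x
  calc ‖NormedSpace.exp x * z‖ = ‖(NormedSpace.exp x - 1) * z + z‖ := by rw [sub_mul, one_mul, sub_add_cancel]
    _ ≤ ‖(NormedSpace.exp x - 1) * z‖ + ‖z‖ := norm_add_le _ _
    _ ≤ ‖NormedSpace.exp x - 1‖ * ‖z‖ + ‖z‖ := by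
        have := norm_mul_le (NormedSpace.exp x - 1) z; linarith
    _ ≤ Real.exp ‖x‖ * ‖z‖ := by nlinarith [norm_nonneg z, norm_nonneg (NormedSpace.exp x - 1)]

lemma trotter_list (l : List A) :
    ‖(l.map NormedSpace.exp).prod - 1 - l.sum‖ ≤
      Real.exp ((l.map norm).sum) - 1 - (l.map norm).sum := by
  induction l with
  | nil => simp
  | cons B l ih =>
    set Q := (l.map NormedSpace.exp).prod with hQ
    set C := l.sum with hC
    set c := (l.map norm).sum with hc
    have hc0 : 0 ≤ c := by
      rw [hc]
      exact List.sum_nonneg (by intro y hy; obtain ⟨a, _, rfl⟩ := List.mem_map.mp hy; exact norm_nonneg a)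
    have hCc : ‖C‖ ≤ c := by rw [hC, hc]; exact trotter_list_sum_norm l
    simp only [List.map_cons, List.prod_cons, List.sum_cons]
    have key : NormedSpace.exp B * Q - 1 - (B + C) =
        NormedSpace.exp B * (Q - 1 - C) + (NormedSpace.exp B - 1 - B) + (NormedSpace.exp B - 1 - B) * C + B * C := by
      noncomm_ring
    rw [key]
    have e1 : ‖NormedSpace.exp B * (Q - 1 - C)‖ ≤ Real.exp ‖B‖ * (Real.exp c - 1 - c) := by
      calc ‖NormedSpace.exp B * (Q - 1 - C)‖ ≤ Real.exp ‖B‖ * ‖Q - 1 - C‖ := trotter_exp_mul B _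
        _ ≤ Real.exp ‖B‖ * (Real.exp c - 1 - c) :=
            mul_le_mul_of_nonneg_left ih (Real.exp_pos _).le
    have e2 : ‖NormedSpace.exp B - 1 - B‖ ≤ Real.exp ‖B‖ - 1 - ‖B‖ := trotter_exp_remainder B
    have e3 : ‖(NormedSpace.exp B - 1 - B) * C‖ ≤ (Real.exp ‖B‖ - 1 - ‖B‖) * c := by
      calc ‖(NormedSpace.exp B - 1 - B) * C‖ ≤ ‖NormedSpace.exp B - 1 - B‖ * ‖C‖ := norm_mul_le _ _
        _ ≤ (Real.exp ‖B‖ - 1 - ‖B‖) * c := by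
            have h0 : 0 ≤ ‖NormedSpace.exp B - 1 - B‖ := norm_nonneg _
            have := Real.add_one_le_exp ‖B‖
            nlinarith [norm_nonneg C]
    have e4 : ‖B * C‖ ≤ ‖B‖ * c := by
      calc ‖B * C‖ ≤ ‖B‖ * ‖C‖ := norm_mul_le _ _
        _ ≤ ‖B‖ * c := mul_le_mul_of_nonneg_left hCc (norm_nonneg _)
    have tri : ‖NormedSpace.exp B * (Q - 1 - C) + (NormedSpace.exp B - 1 - B) + (NormedSpace.exp B - 1 - B) * C + B * C‖ ≤
        ‖NormedSpace.exp B * (Q - 1 - C)‖ + ‖NormedSpace.exp B - 1 - B‖ + ‖(NormedSpace.exp B - 1 - B) * C‖ + ‖B * C‖ := by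
      calc _ ≤ ‖NormedSpace.exp B * (Q - 1 - C) + (NormedSpace.exp B - 1 - B) + (NormedSpace.exp B - 1 - B) * C‖ + ‖B * C‖ :=
            norm_add_le _ _
        _ ≤ _ := by
            have h1 : ‖NormedSpace.exp B * (Q - 1 - C) + (NormedSpace.exp B - 1 - B) + (NormedSpace.exp B - 1 - B) * C‖ ≤
                ‖NormedSpace.exp B * (Q - 1 - C) + (NormedSpace.exp B - 1 - B)‖ + ‖(NormedSpace.exp B - 1 - B) * C‖ :=
              norm_add_le _ _
            have h2 : ‖NormedSpace.exp B * (Q - 1 - C) + (NormedSpace.exp B - 1 - B)‖ ≤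
                ‖NormedSpace.exp B * (Q - 1 - C)‖ + ‖NormedSpace.exp B - 1 - B‖ := norm_add_le _ _
            linarith
    have hexp : Real.exp (‖B‖ + c) = Real.exp ‖B‖ * Real.exp c := Real.exp_add _ _
    calc _ ≤ ‖NormedSpace.exp B * (Q - 1 - C)‖ + ‖NormedSpace.exp B - 1 - B‖ + ‖(NormedSpace.exp B - 1 - B) * C‖ + ‖B * C‖ := tri
      _ ≤ Real.exp ‖B‖ * (Real.exp c - 1 - c) + (Real.exp ‖B‖ - 1 - ‖B‖) +
          (Real.exp ‖B‖ - 1 - ‖B‖) * c + ‖B‖ * c := by linarith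
      _ = Real.exp (‖B‖ + c) - 1 - (‖B‖ + c) := by rw [hexp]; ring

lemma trotter_pow_norm_le (Y : A) (h1 : ‖(1 : A)‖ ≤ 1) (hY : ‖Y‖ ≤ 1) (n : ℕ) :
    ‖Y ^ n‖ ≤ 1 := by
  induction n with
  | zero => simpa using h1
  | succ n ih =>
    rw [pow_succ]
    calc ‖Y ^ n * Y‖ ≤ ‖Y ^ n‖ * ‖Y‖ := norm_mul_le _ _
      _ ≤ 1 := by nlinarith [norm_nonneg (Y ^ n), norm_nonneg Y]

lemma trotter_pow_sub_pow (X Y : A) (h1 : ‖(1 : A)‖ ≤ 1) (hX : ‖X‖ ≤ 1) (hY : ‖Y‖ ≤ 1)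
    (n : ℕ) : ‖X ^ n - Y ^ n‖ ≤ n * ‖X - Y‖ := by
  induction n with
  | zero => simp
  | succ n ih =>
    have key : X ^ (n + 1) - Y ^ (n + 1) = X * (X ^ n - Y ^ n) + (X - Y) * Y ^ n := by
      rw [pow_succ', pow_succ']
      noncomm_ring
    rw [key]
    have e1 : ‖X * (X ^ n - Y ^ n)‖ ≤ n * ‖X - Y‖ := by
      calc ‖X * (X ^ n - Y ^ n)‖ ≤ ‖X‖ * ‖X ^ n - Y ^ n‖ := norm_mul_le _ _
        _ ≤ n * ‖X - Y‖ := by nlinarith [norm_nonneg (X ^ n - Y ^ n), norm_nonneg X]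
    have e2 : ‖(X - Y) * Y ^ n‖ ≤ ‖X - Y‖ := by
      calc ‖(X - Y) * Y ^ n‖ ≤ ‖X - Y‖ * ‖Y ^ n‖ := norm_mul_le _ _
        _ ≤ ‖X - Y‖ := by nlinarith [norm_nonneg (X - Y), trotter_pow_norm_le Y h1 hY n, norm_nonneg (Y ^ n)]
    calc ‖X * (X ^ n - Y ^ n) + (X - Y) * Y ^ n‖ ≤
        ‖X * (X ^ n - Y ^ n)‖ + ‖(X - Y) * Y ^ n‖ := norm_add_le _ _
      _ ≤ (n + 1 : ℕ) * ‖X - Y‖ := by push_cast; linarith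

end Op

set_option maxHeartbeats 1000000 in
/-- **Trotter simulation of a poly-local Hamiltonian.** Let `H 1, …, H L` be
self-adjoint bounded operators on a finite-dimensional complex Hilbert space,
`Htot = ∑ ℓ, H ℓ`, `t : ℝ`, `n ≥ 1`.  Each `exp(2πi(t/n) H ℓ)` is unitary,
`exp(2πi t Htot)` is unitary, and
`‖exp(2πi t Htot) − (exp(2πi(t/n) H 1) ⋯ exp(2πi(t/n) H L))^n‖
  ≤ (2π|t| ∑ ℓ ‖H ℓ‖)² · exp(4π|t| ∑ ℓ ‖H ℓ‖) / n`. -/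
theorem trotter_unitary_evolution {E : Type*} [NormedAddCommGroup E]
    [InnerProductSpace ℂ E] [FiniteDimensional ℂ E]
    (L : ℕ) (H : Fin L → E →L[ℂ] E) (hH : ∀ ℓ, IsSelfAdjoint (H ℓ))
    (Htot : E →L[ℂ] E) (hHtot : Htot = ∑ ℓ, H ℓ) (t : ℝ) (n : ℕ) (hn : 1 ≤ n) :
    (∀ ℓ, NormedSpace.exp ((2 * Real.pi * I * (t / n)) • H ℓ) ∈ unitary (E →L[ℂ] E)) ∧
    NormedSpace.exp ((2 * Real.pi * I * t) • Htot) ∈ unitary (E →L[ℂ] E) ∧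
    ‖NormedSpace.exp ((2 * Real.pi * I * t) • Htot) -
        (List.ofFn fun ℓ => NormedSpace.exp ((2 * Real.pi * I * (t / n)) • H ℓ)).prod ^ n‖ ≤
      (2 * Real.pi * |t| * ∑ ℓ, ‖H ℓ‖) ^ 2 *
        Real.exp (4 * Real.pi * |t| * ∑ ℓ, ‖H ℓ‖) / n := by
  let +nondep : NormedAlgebra ℚ (E →L[ℂ] E) := .restrictScalars ℚ ℂ (E →L[ℂ] E)
  have hskew : ∀ (z : ℂ), (starRingEnd ℂ) z = -z → ∀ T : E →L[ℂ] E, IsSelfAdjoint T →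
      z • T ∈ skewAdjoint (E →L[ℂ] E) := by
    intro z hz T hT
    have hz' : star z = -z := hz
    rw [skewAdjoint.mem_iff, star_smul, hT.star_eq, hz', neg_smul]
  have hconj1 : (starRingEnd ℂ) (2 * (Real.pi : ℂ) * I * ((t : ℂ) / (n : ℂ))) =
      -(2 * (Real.pi : ℂ) * I * ((t : ℂ) / (n : ℂ))) := by
    simp only [map_mul, map_div₀, map_ofNat, Complex.conj_I, Complex.conj_ofReal, map_natCast]
    ring
  have hconj2 : (starRingEnd ℂ) (2 * (Real.pi : ℂ) * I * (t : ℂ)) =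
      -(2 * (Real.pi : ℂ) * I * (t : ℂ)) := by
    simp only [map_mul, map_ofNat, Complex.conj_I, Complex.conj_ofReal]
    ring
  have hHtotSA : IsSelfAdjoint Htot := by
    rw [hHtot]
    unfold IsSelfAdjoint
    rw [star_sum]
    exact Finset.sum_congr rfl fun ℓ _ => (hH ℓ).star_eq
  have part1 : ∀ ℓ, NormedSpace.exp ((2 * Real.pi * I * (t / n)) • H ℓ) ∈ unitary (E →L[ℂ] E) :=
    fun ℓ => exp_mem_unitary_of_mem_skewAdjoint (hskew _ hconj1 _ (hH ℓ))
  have part2 : NormedSpace.exp ((2 * Real.pi * I * t) • Htot) ∈ unitary (E →L[ℂ] E) :=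
    exp_mem_unitary_of_mem_skewAdjoint (hskew _ hconj2 _ hHtotSA)
  refine ⟨part1, part2, ?_⟩
  -- notation
  set c : ℂ := 2 * Real.pi * I * (t / n) with hcdef
  set S : ℝ := ∑ ℓ, ‖H ℓ‖ with hSdef
  have hS : 0 ≤ S := Finset.sum_nonneg fun ℓ _ => norm_nonneg _
  have hn' : (1 : ℝ) ≤ n := by exact_mod_cast hn
  have hn0 : (0 : ℝ) < n := by linarith
  have hnne : (n : ℂ) ≠ 0 := Nat.cast_ne_zero.mpr (by omega)
  have hcnorm : ‖c‖ = 2 * Real.pi * |t| / n := by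
    rw [hcdef]
    simp [norm_div, _root_.abs_of_nonneg Real.pi_pos.le]
    ring
  set l : List (E →L[ℂ] E) := List.ofFn (fun ℓ => c • H ℓ) with hldef
  have hlsum : l.sum = c • Htot := by
    rw [hldef, List.sum_ofFn, hHtot, Finset.smul_sum]
  have hlnorm : (l.map norm).sum = ‖c‖ * S := by
    rw [hldef, List.map_ofFn, List.sum_ofFn, hSdef, Finset.mul_sum]
    exact Finset.sum_congr rfl fun ℓ _ => norm_smul c (H ℓ)
  have hmapexp : (List.ofFn fun ℓ => NormedSpace.exp (c • H ℓ)) = l.map NormedSpace.exp := by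
    rw [hldef, List.map_ofFn]
    rfl
  set X : E →L[ℂ] E := NormedSpace.exp (c • Htot) with hXdef
  set P : E →L[ℂ] E := (l.map NormedSpace.exp).prod with hPdef
  have hXpow : NormedSpace.exp ((2 * Real.pi * I * t) • Htot) = X ^ n := by
    have h1 : (2 * Real.pi * I * (t : ℂ)) • Htot = (n : ℂ) • (c • Htot) := by
      rw [smul_smul]
      congr 1
      rw [hcdef]
      field_simp
    rw [h1, Nat.cast_smul_eq_nsmul, NormedSpace.exp_nsmul]
  have hunorm : ∀ u : E →L[ℂ] E, u ∈ unitary (E →L[ℂ] E) → ‖u‖ ≤ 1 := by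
    intro u hu
    have h1 : star u * u = 1 := hu.1
    have h2 : ‖star u * u‖ = ‖u‖ * ‖u‖ := CStarRing.norm_star_mul_self
    rw [h1] at h2
    have h3 : ‖(1 : E →L[ℂ] E)‖ ≤ 1 := by
      rw [ContinuousLinearMap.one_def]
      exact ContinuousLinearMap.norm_id_le
    nlinarith [norm_nonneg u]
  have hXu : X ∈ unitary (E →L[ℂ] E) := by
    apply exp_mem_unitary_of_mem_skewAdjoint
    exact hskew c hconj1 Htot hHtotSA
  have hPu : P ∈ unitary (E →L[ℂ] E) := by
    rw [hPdef]
    apply Submonoid.list_prod_mem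
    intro x hx
    obtain ⟨y, hy, rfl⟩ := List.mem_map.mp hx
    rw [hldef] at hy
    obtain ⟨ℓ, rfl⟩ := List.mem_ofFn.mp hy
    exact part1 ℓ
  have hX1 : ‖X‖ ≤ 1 := hunorm X hXu
  have hP1 : ‖P‖ ≤ 1 := hunorm P hPu
  have h1norm : ‖(1 : E →L[ℂ] E)‖ ≤ 1 := by
    rw [ContinuousLinearMap.one_def]
    exact ContinuousLinearMap.norm_id_le
  set σ : ℝ := ‖c‖ * S with hσdef
  have hσ0 : 0 ≤ σ := mul_nonneg (norm_nonneg c) hS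
  -- one-step bound
  have hXP : ‖X - P‖ ≤ 2 * (Real.exp σ - 1 - σ) := by
    have hM : ‖c • Htot‖ ≤ σ := by
      have hns : ‖c • Htot‖ = ‖c‖ * ‖Htot‖ := norm_smul c Htot
      have hHn : ‖Htot‖ ≤ S := by
        rw [hHtot, hSdef]
        exact norm_sum_le _ _
      rw [hns, hσdef]
      exact mul_le_mul_of_nonneg_left hHn (norm_nonneg c)
    have d1 : ‖X - 1 - c • Htot‖ ≤ Real.exp σ - 1 - σ :=
      (trotter_exp_remainder _).trans (trotter_mono (norm_nonneg _) hM)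
    have d2 : ‖P - 1 - c • Htot‖ ≤ Real.exp σ - 1 - σ := by
      have h := trotter_list l
      rw [hlsum, hlnorm] at h
      rw [hPdef]
      exact h
    calc ‖X - P‖ = ‖(X - 1 - c • Htot) - (P - 1 - c • Htot)‖ := by congr 1; abel
      _ ≤ ‖X - 1 - c • Htot‖ + ‖P - 1 - c • Htot‖ := norm_sub_le _ _
      _ ≤ 2 * (Real.exp σ - 1 - σ) := by linarith
  have hpow : ‖X ^ n - P ^ n‖ ≤ n * ‖X - P‖ := trotter_pow_sub_pow X P h1norm hX1 hP1 n
  set s : ℝ := 2 * Real.pi * |t| * S with hsdef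
  have hs0 : 0 ≤ s := by
    rw [hsdef]
    positivity
  have hσs : σ = s / n := by
    rw [hσdef, hcnorm, hsdef]
    ring
  have hσles : σ ≤ 2 * s := by
    rw [hσs]
    have : s / n ≤ s := div_le_self hs0 hn'
    linarith
  have hexpσ : Real.exp σ ≤ Real.exp (2 * s) := Real.exp_le_exp.mpr hσles
  have haux : 2 * (Real.exp σ - 1 - σ) ≤ σ ^ 2 * Real.exp σ := by
    have := trotter_real_aux hσ0
    nlinarith
  have hfinal : (n : ℝ) * (2 * (Real.exp σ - 1 - σ)) ≤ s ^ 2 * Real.exp (2 * s) / n := by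
    have step1 : (n : ℝ) * (2 * (Real.exp σ - 1 - σ)) ≤ n * (σ ^ 2 * Real.exp σ) :=
      mul_le_mul_of_nonneg_left haux hn0.le
    have step2 : (n : ℝ) * (σ ^ 2 * Real.exp σ) = s ^ 2 / n * Real.exp σ := by
      rw [hσs]
      field_simp
    have step3 : s ^ 2 / n * Real.exp σ ≤ s ^ 2 / n * Real.exp (2 * s) := by
      refine mul_le_mul_of_nonneg_left hexpσ ?_
      positivity
    have step4 : s ^ 2 / n * Real.exp (2 * s) = s ^ 2 * Real.exp (2 * s) / n := by ring
    linarith [step1, step2.le, step3]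
  have hgoal_rhs : (2 * Real.pi * |t| * S) ^ 2 * Real.exp (4 * Real.pi * |t| * S) / n =
      s ^ 2 * Real.exp (2 * s) / n := by
    rw [hsdef]
    ring_nf
  calc ‖NormedSpace.exp ((2 * Real.pi * I * t) • Htot) -
        (List.ofFn fun ℓ => NormedSpace.exp (c • H ℓ)).prod ^ n‖
      = ‖X ^ n - P ^ n‖ := by rw [hXpow, hmapexp, hPdef]
    _ ≤ n * ‖X - P‖ := hpow
    _ ≤ n * (2 * (Real.exp σ - 1 - σ)) := mul_le_mul_of_nonneg_left hXP hn0.le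
    _ ≤ s ^ 2 * Real.exp (2 * s) / n := hfinal
    _ = (2 * Real.pi * |t| * S) ^ 2 * Real.exp (4 * Real.pi * |t| * S) / n := hgoal_rhs.symm
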